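/- Let K be a commutative ring, let S, T, R be pairwise disjoint nonempty finite subsets of α, let π, τ, ρ be linear set partitions of S, T, R respectively, and let s ∈ S, t ∈ T. In the free K-module with basis the linear set partitions of finite subsets of α, define π ▷_s τ := Σ_{ℓ ∈ τ} [ (π ∖ {ℓ_s}) ∪ {ℓ_s ∘_s ℓ} ∪ (τ ∖ {ℓ}) ], a sum over the lists ℓ of τ of linear set partitions of (S ∖ {s}) ∪ T, extended K-bilinearly. Then the nested pre-Lie identity holds: π ▷_s (τ ▷_t ρ) − (π ▷_s τ) ▷_t ρ = τ ▷_t (π ▷_s ρ) − (τ ▷_t π) ▷_s ρ. -/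

import Mathlib

variable {α : Type*} [DecidableEq α]

/-- A linear set partition of a finite set `S`: a finite set of nonempty duplicate-free
lists whose element sets are pairwise disjoint with union `S`. -/
def IsLinearSetPartition (π : Finset (List α)) (S : Finset α) : Prop :=
  (∀ l ∈ π, l ≠ [] ∧ l.Nodup) ∧
  (∀ l ∈ π, ∀ l' ∈ π, l ≠ l' → ∀ x ∈ l, x ∉ l') ∧
  π.biUnion (fun l => l.toFinset) = S

/-- The substitution `w ∘_s m`: if `w = x ++ [s] ++ y`, this is `x ++ m ++ y`. -/
def substAt (s : α) (m w : List α) : List α :=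
  w.takeWhile (fun x => x ≠ s) ++ m ++ (w.dropWhile (fun x => x ≠ s)).tail

/-- `(π \ {ℓ_s}) ∪ {ℓ_s ∘_s m}`: replace the unique list of `π` containing `s` by its
substitution with `m` at `s`, leaving the other lists unchanged. -/
def lspSubst (s : α) (m : List α) (π : Finset (List α)) : Finset (List α) :=
  π.image (fun l => if s ∈ l then substAt s m l else l)

/-- The NPL partial composition of linear set partitions,
`π ▷_s τ := Σ_{ℓ ∈ τ} [(π \ {ℓ_s}) ∪ {ℓ_s ∘_s ℓ} ∪ (τ \ {ℓ})]`, taken in the free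
`K`-module on linear set partitions. -/
noncomputable def lComp (K : Type*) [CommRing K] (s : α)
    (π τ : Finset (List α)) : Finset (List α) →₀ K :=
  ∑ l ∈ τ, Finsupp.single (lspSubst s l π ∪ τ.erase l) 1

/-- The bilinear extension of `▷_s` to the free `K`-module on linear set partitions. -/
noncomputable def lCompL (K : Type*) [CommRing K] (s : α)
    (x y : Finset (List α) →₀ K) : Finset (List α) →₀ K :=
  x.sum fun π a => y.sum fun τ b => (a * b) • lComp K s π τ

/-- The nested pre-Lie identity
`π ▷_s (τ ▷_t ρ) − (π ▷_s τ) ▷_t ρ = τ ▷_t (π ▷_s ρ) − (τ ▷_t π) ▷_s ρ`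
for the NPL-operad structure on the species of linear set partitions (the instance
for `As₊` of the NPL-operad structure on `E ∘ q`). -/

lemma first_split {s : α} {w : List α} (h : s ∈ w) :
    ∃ a b, w = a ++ s :: b ∧ s ∉ a := by
  induction w with
  | nil => simp at h
  | cons c w ih =>
    by_cases hc : c = s
    · exact ⟨[], w, by rw [hc]; rfl, by simp⟩
    · rcases ih (by rcases List.mem_cons.1 h with h | h; exacts [absurd h.symm hc, h]) with
        ⟨a, b, h1, h2⟩
      refine ⟨c :: a, b, by rw [h1]; rfl, ?_⟩
      simp only [List.mem_cons, not_or]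
      exact ⟨fun h' => hc h'.symm, h2⟩

lemma takeWhile_split {s : α} {u : List α} (v : List α) (h : s ∉ u) :
    (u ++ s :: v).takeWhile (fun x => x ≠ s) = u := by
  induction u with
  | nil => simp [List.takeWhile_cons]
  | cons c u ih =>
    simp only [List.mem_cons, not_or] at h
    rw [List.cons_append, List.takeWhile_cons, if_pos (by simp; exact fun h' => h.1 h'.symm), ih h.2]

lemma dropWhile_split {s : α} {u : List α} (v : List α) (h : s ∉ u) :
    (u ++ s :: v).dropWhile (fun x => x ≠ s) = s :: v := by
  induction u with
  | nil => simp [List.dropWhile_cons]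
  | cons c u ih =>
    simp only [List.mem_cons, not_or] at h
    rw [List.cons_append, List.dropWhile_cons, if_pos (by simp; exact fun h' => h.1 h'.symm), ih h.2]

lemma substAt_eq {s : α} (m : List α) {u : List α} (v : List α) (h : s ∉ u) :
    substAt s m (u ++ s :: v) = u ++ m ++ v := by
  rw [substAt, takeWhile_split v h, dropWhile_split v h, List.tail_cons]

lemma mem_substAt {s : α} {w : List α} (hw : w.Nodup) (hs : s ∈ w) (m : List α) (x : α) :
    x ∈ substAt s m w ↔ x ∈ m ∨ (x ∈ w ∧ x ≠ s) := by
  obtain ⟨a, b, rfl, ha⟩ := first_split hs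
  rw [List.nodup_middle, List.nodup_cons, List.mem_append] at hw
  have hb : s ∉ b := fun h => hw.1 (Or.inr h)
  rw [substAt_eq m b ha]
  simp only [List.mem_append, List.mem_cons]
  constructor
  · rintro ((h | h) | h)
    · exact Or.inr ⟨Or.inl h, fun he => ha (he ▸ h)⟩
    · exact Or.inl h
    · exact Or.inr ⟨Or.inr (Or.inr h), fun he => hb (he ▸ h)⟩
  · rintro (h | ⟨(h | h | h), hne⟩)
    · exact Or.inl (Or.inr h)
    · exact Or.inl (Or.inl h)
    · exact absurd h hne
    · exact Or.inr h

lemma substAt_comm {s t : α} {p q : List α} (m : List α) (hsp : s ∈ p) (htq : t ∈ q)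
    (hsq : s ∉ q) : substAt s m (substAt t p q) = substAt t (substAt s m p) q := by
  obtain ⟨a, b, rfl, ha⟩ := first_split htq
  obtain ⟨c, d, rfl, hc⟩ := first_split hsp
  rw [substAt_eq _ b ha, substAt_eq _ d hc, substAt_eq _ b ha]
  have h1 : a ++ (c ++ s :: d) ++ b = (a ++ c) ++ s :: (d ++ b) := by simp
  rw [h1, substAt_eq _ (d ++ b) (by
    simp only [List.mem_append, not_or]
    exact ⟨fun h => hsq (List.mem_append.2 (Or.inl h)), hc⟩)]
  simp

lemma substAt_singleton (s : α) (m : List α) : substAt s m [s] = m := by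
  simp [substAt, List.takeWhile_cons, List.dropWhile_cons]

lemma eq_singleton_of_nodup {s : α} {w : List α} (hw : w.Nodup) (hs : s ∈ w)
    (h : ∀ x ∈ w, x = s) : w = [s] := by
  cases w with
  | nil => simp at hs
  | cons c w =>
    have hc : c = s := h c List.mem_cons_self
    have : w = [] := by
      apply List.eq_nil_iff_forall_not_mem.2
      intro x hx
      have := h x (List.mem_cons_of_mem c hx)
      exact (List.nodup_cons.1 hw).1 (hc ▸ this ▸ hx)
    rw [hc, this]

lemma lspSubst_eq_insert {σ : Finset (List α)} {s : α} {w : List α} (m : List α)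
    (hw : w ∈ σ) (hsw : s ∈ w) (hu : ∀ l ∈ σ, s ∈ l → l = w) :
    lspSubst s m σ = insert (substAt s m w) (σ.erase w) := by
  unfold lspSubst
  conv_lhs => rw [← Finset.insert_erase hw]
  rw [Finset.image_insert, if_pos hsw]
  congr 1
  have h : ∀ l ∈ σ.erase w, (if s ∈ l then substAt s m l else l) = l := by
    intro l hl
    exact if_neg fun hsl => (Finset.mem_erase.1 hl).1 (hu l (Finset.mem_erase.1 hl).2 hsl)
  rw [Finset.image_congr h, Finset.image_id']

lemma lCompL_single_left (K : Type*) [CommRing K] (s t : α) (π τ ρ : Finset (List α)) :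
    lCompL K s (Finsupp.single π 1) (lComp K t τ ρ)
      = ∑ m ∈ ρ, lComp K s π (lspSubst t m τ ∪ ρ.erase m) := by
  rw [lCompL, Finsupp.sum_single_index (by simp [Finsupp.sum]), lComp,
    ← Finsupp.sum_finsetSum_index (by simp) (by intro i x y; simp [mul_add, add_smul])]
  exact Finset.sum_congr rfl fun m _ => by
    rw [Finsupp.sum_single_index (by simp), one_mul, one_smul]

lemma lCompL_single_right (K : Type*) [CommRing K] (s t : α) (π τ ρ : Finset (List α)) :
    lCompL K t (lComp K s π τ) (Finsupp.single ρ 1)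
      = ∑ l ∈ τ, lComp K t (lspSubst s l π ∪ τ.erase l) ρ := by
  rw [lCompL, lComp,
    ← Finsupp.sum_finsetSum_index (by simp [Finsupp.sum]) (by
      intro i x y
      rw [← Finsupp.sum_add]
      exact Finsupp.sum_congr fun τ' _ => by rw [add_mul, add_smul])]
  exact Finset.sum_congr rfl fun l _ => by
    rw [Finsupp.sum_single_index (by simp), Finsupp.sum_single_index (by simp), one_mul, one_smul]

set_option maxHeartbeats 2000000 in
lemma key (K : Type*) [CommRing K] {S T R : Finset α} {π τ ρ : Finset (List α)}
    (hπ : IsLinearSetPartition π S) (hτ : IsLinearSetPartition τ T)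
    (hρ : IsLinearSetPartition ρ R)
    (hST : Disjoint S T) (hSR : Disjoint S R) (hTR : Disjoint T R)
    {s t : α} {p q : List α}
    (hp : p ∈ π) (hsp : s ∈ p) (hpu : ∀ l ∈ π, s ∈ l → l = p)
    (hq : q ∈ τ) (htq : t ∈ q) (hqu : ∀ l ∈ τ, t ∈ l → l = q) :
    lCompL K s (Finsupp.single π 1) (lComp K t τ ρ) -
        lCompL K t (lComp K s π τ) (Finsupp.single ρ 1) =
      ∑ m ∈ ρ, ∑ l ∈ ρ.erase m, Finsupp.single
        (insert (substAt s l p) (insert (substAt t m q)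
          (π.erase p ∪ τ.erase q ∪ (ρ.erase m).erase l))) (1 : K) := by
  obtain ⟨hπ1, hπ2, hπ3⟩ := hπ
  obtain ⟨hτ1, hτ2, hτ3⟩ := hτ
  obtain ⟨hρ1, hρ2, hρ3⟩ := hρ
  have hπS : ∀ l ∈ π, ∀ x ∈ l, x ∈ S := fun l hl x hx => by
    rw [← hπ3]; exact Finset.mem_biUnion.2 ⟨l, hl, List.mem_toFinset.2 hx⟩
  have hτT : ∀ l ∈ τ, ∀ x ∈ l, x ∈ T := fun l hl x hx => by
    rw [← hτ3]; exact Finset.mem_biUnion.2 ⟨l, hl, List.mem_toFinset.2 hx⟩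
  have hρR : ∀ l ∈ ρ, ∀ x ∈ l, x ∈ R := fun l hl x hx => by
    rw [← hρ3]; exact Finset.mem_biUnion.2 ⟨l, hl, List.mem_toFinset.2 hx⟩
  have hpnd : p.Nodup := (hπ1 p hp).2
  have hqnd : q.Nodup := (hτ1 q hq).2
  have hsS : s ∈ S := hπS p hp s hsp
  have htT : t ∈ T := hτT q hq t htq
  have htp : t ∉ p := fun h => Finset.disjoint_left.1 hST (hπS p hp t h) htT
  have htnπ : ∀ l ∈ π, t ∉ l := fun l hl h => Finset.disjoint_left.1 hST (hπS l hl t h) htT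
  have hτρ : ∀ l ∈ τ, l ∉ ρ := by
    intro l hl hl'
    obtain ⟨x, hx⟩ := List.exists_mem_of_ne_nil l (hτ1 l hl).1
    exact Finset.disjoint_left.1 hTR (hτT l hl x hx) (hρR l hl' x hx)
  have hπτ : ∀ l ∈ π, l ∉ τ := by
    intro l hl hl'
    obtain ⟨x, hx⟩ := List.exists_mem_of_ne_nil l (hπ1 l hl).1
    exact Finset.disjoint_left.1 hST (hπS l hl x hx) (hτT l hl' x hx)
  have F2 : ∀ m : List α, Disjoint (τ.erase q) (ρ.erase m) :=
    fun m => Finset.disjoint_left.2 fun l hl hl' =>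
      hτρ l (Finset.mem_erase.1 hl).2 (Finset.mem_erase.1 hl').2
  have F1 : ∀ m ∈ ρ, substAt t m q ∉ τ.erase q ∪ ρ.erase m := by
    intro m hm h
    have hmem := mem_substAt hqnd htq m
    rcases Finset.mem_union.1 h with h | h
    · obtain ⟨x, hx⟩ := List.exists_mem_of_ne_nil m (hρ1 m hm).1
      have hxq : x ∈ substAt t m q := (hmem x).2 (Or.inl hx)
      exact Finset.disjoint_left.1 hTR (hτT _ (Finset.mem_erase.1 h).2 x hxq) (hρR m hm x hx)
    · have hin : substAt t m q ∈ ρ := (Finset.mem_erase.1 h).2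
      have hne : substAt t m q ≠ m := (Finset.mem_erase.1 h).1
      have hq1 : ∀ x ∈ q, x = t := by
        intro x hx
        by_contra hxt
        have hx' : x ∈ substAt t m q := (hmem x).2 (Or.inr ⟨hx, hxt⟩)
        exact Finset.disjoint_left.1 hTR (hτT q hq x hx) (hρR _ hin x hx')
      rw [eq_singleton_of_nodup hqnd htq hq1, substAt_singleton] at hne
      exact hne rfl
  have F3 : ∀ l ∈ τ.erase q, q ∉ insert (substAt s l p) (π.erase p) := by
    intro l hl h
    have hlq := Finset.mem_erase.1 hl
    rcases Finset.mem_insert.1 h with h | h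
    · have hmem := mem_substAt hpnd hsp l
      have hp1 : ∀ x ∈ p, x = s := by
        intro x hx
        by_contra hxs
        have hxq : x ∈ q := h ▸ ((hmem x).2 (Or.inr ⟨hx, hxs⟩))
        exact Finset.disjoint_left.1 hST (hπS p hp x hx) (hτT q hq x hxq)
      rw [eq_singleton_of_nodup hpnd hsp hp1, substAt_singleton] at h
      exact hlq.1 h.symm
    · exact hπτ q (Finset.mem_erase.1 h).2 hq
  have hlspπ : ∀ l : List α, lspSubst s l π = insert (substAt s l p) (π.erase p) :=
    fun l => lspSubst_eq_insert l hp hsp hpu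
  -- the three groups of terms
  have hcore1 : ∀ m ∈ ρ, lComp K s π (lspSubst t m τ ∪ ρ.erase m) =
      Finsupp.single (insert (substAt s (substAt t m q) p)
          (π.erase p ∪ τ.erase q ∪ ρ.erase m)) (1 : K) +
        ((∑ l ∈ τ.erase q, Finsupp.single (insert (substAt s l p) (insert (substAt t m q)
            (π.erase p ∪ (τ.erase q).erase l ∪ ρ.erase m))) (1 : K)) +
          ∑ l ∈ ρ.erase m, Finsupp.single (insert (substAt s l p) (insert (substAt t m q)
            (π.erase p ∪ τ.erase q ∪ (ρ.erase m).erase l))) (1 : K)) := by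
    intro m hm
    rw [lComp, lspSubst_eq_insert m hq htq hqu, Finset.insert_union,
      Finset.sum_insert (F1 m hm), Finset.erase_insert (F1 m hm), Finset.sum_union (F2 m)]
    congr 1
    · rw [hlspπ]
      congr 1
      rw [Finset.insert_union, Finset.union_assoc]
    congr 1
    · refine Finset.sum_congr rfl fun l hl => ?_
      have hqml : substAt t m q ≠ l := fun h => F1 m hm (h ▸ Finset.mem_union_left _ hl)
      have hlρ : l ∉ ρ.erase m := fun h => Finset.disjoint_left.1 (F2 m) hl h
      rw [hlspπ, Finset.erase_insert_of_ne hqml, Finset.erase_union_distrib,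
        Finset.erase_eq_of_notMem hlρ]
      congr 1
      ext x
      simp only [Finset.mem_insert, Finset.mem_union, Finset.mem_erase]
      tauto
    · refine Finset.sum_congr rfl fun l hl => ?_
      have hqml : substAt t m q ≠ l := fun h => F1 m hm (h ▸ Finset.mem_union_right _ hl)
      have hlτ : l ∉ τ.erase q := fun h => Finset.disjoint_left.1 (F2 m) h hl
      rw [hlspπ, Finset.erase_insert_of_ne hqml, Finset.erase_union_distrib,
        Finset.erase_eq_of_notMem hlτ]
      congr 1
      ext x
      simp only [Finset.mem_insert, Finset.mem_union, Finset.mem_erase]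
      tauto
  have hcore2a : lComp K t (lspSubst s q π ∪ τ.erase q) ρ =
      ∑ m ∈ ρ, Finsupp.single (insert (substAt s (substAt t m q) p)
        (π.erase p ∪ τ.erase q ∪ ρ.erase m)) (1 : K) := by
    rw [lComp]
    refine Finset.sum_congr rfl fun m _ => ?_
    have hwmem := mem_substAt hpnd hsp q
    have htw : t ∈ substAt s q p := (hwmem t).2 (Or.inl htq)
    have hwτ : ∀ l ∈ insert (substAt s q p) (π.erase p) ∪ τ.erase q, t ∈ l →
        l = substAt s q p := by
      intro l hl htl
      rcases Finset.mem_union.1 hl with hl | hl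
      · rcases Finset.mem_insert.1 hl with rfl | hl
        · rfl
        · exact absurd htl (htnπ l (Finset.mem_erase.1 hl).2)
      · exact absurd (hqu l (Finset.mem_erase.1 hl).2 htl) (Finset.mem_erase.1 hl).1
    have hwnot : substAt s q p ∉ π.erase p ∪ τ.erase q := by
      intro h
      rcases Finset.mem_union.1 h with h | h
      · exact htnπ _ (Finset.mem_erase.1 h).2 htw
      · exact (Finset.mem_erase.1 h).1 (hqu _ (Finset.mem_erase.1 h).2 htw)
    rw [hlspπ q,
      lspSubst_eq_insert m (Finset.mem_union_left _ (Finset.mem_insert_self _ _)) htw hwτ,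
      Finset.insert_union (substAt s q p), Finset.erase_insert hwnot,
      substAt_comm m htq hsp htp, Finset.insert_union]
  have hcore2b : ∀ l ∈ τ.erase q, lComp K t (lspSubst s l π ∪ τ.erase l) ρ =
      ∑ m ∈ ρ, Finsupp.single (insert (substAt s l p) (insert (substAt t m q)
        (π.erase p ∪ (τ.erase q).erase l ∪ ρ.erase m))) (1 : K) := by
    intro l hl
    have hlq : l ≠ q := (Finset.mem_erase.1 hl).1
    have hlτ : l ∈ τ := (Finset.mem_erase.1 hl).2
    rw [lComp]
    refine Finset.sum_congr rfl fun m _ => ?_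
    have hqσ : q ∈ insert (substAt s l p) (π.erase p) ∪ τ.erase l :=
      Finset.mem_union_right _ (Finset.mem_erase.2 ⟨fun h => hlq h.symm, hq⟩)
    have hqun : ∀ l' ∈ insert (substAt s l p) (π.erase p) ∪ τ.erase l, t ∈ l' → l' = q := by
      intro l' hl' htl'
      rcases Finset.mem_union.1 hl' with hl' | hl'
      · rcases Finset.mem_insert.1 hl' with rfl | hl'
        · rcases (mem_substAt hpnd hsp l t).1 htl' with h | h
          · exact absurd (hqu l hlτ h) hlq
          · exact absurd h.1 htp
        · exact absurd htl' (htnπ _ (Finset.mem_erase.1 hl').2)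
      · exact hqu _ (Finset.mem_erase.1 hl').2 htl'
    rw [hlspπ l, lspSubst_eq_insert m hqσ htq hqun, Finset.erase_union_distrib,
      Finset.erase_eq_of_notMem (F3 l hl)]
    congr 1
    ext x
    simp only [Finset.mem_insert, Finset.mem_union, Finset.mem_erase]
    tauto
  rw [lCompL_single_left, lCompL_single_right, Finset.sum_congr rfl hcore1,
    ← Finset.add_sum_erase τ _ hq, hcore2a, Finset.sum_congr rfl hcore2b,
    Finset.sum_add_distrib, Finset.sum_add_distrib,
    Finset.sum_comm (s := τ.erase q) (t := ρ)]
  abel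

set_option maxHeartbeats 1000000 in
theorem lComp_nested_preLie (K : Type*) [CommRing K]
    (S T R : Finset α) (π τ ρ : Finset (List α))
    (hπ : IsLinearSetPartition π S) (hτ : IsLinearSetPartition τ T)
    (hρ : IsLinearSetPartition ρ R)
    (hS : S.Nonempty) (hT : T.Nonempty) (hR : R.Nonempty)
    (hST : Disjoint S T) (hSR : Disjoint S R) (hTR : Disjoint T R)
    (s t : α) (hs : s ∈ S) (ht : t ∈ T) :
    lCompL K s (Finsupp.single π 1) (lComp K t τ ρ) -
        lCompL K t (lComp K s π τ) (Finsupp.single ρ 1) =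
      lCompL K t (Finsupp.single τ 1) (lComp K s π ρ) -
        lCompL K s (lComp K t τ π) (Finsupp.single ρ 1) := by
  obtain ⟨p, hp, hsp⟩ : ∃ l ∈ π, s ∈ l := by
    rw [← hπ.2.2] at hs
    obtain ⟨l, hl, hxl⟩ := Finset.mem_biUnion.1 hs
    exact ⟨l, hl, List.mem_toFinset.1 hxl⟩
  have hpu : ∀ l ∈ π, s ∈ l → l = p := by
    intro l hl hsl
    by_contra hne
    exact hπ.2.1 l hl p hp hne s hsl hsp
  obtain ⟨q, hq, htq⟩ : ∃ l ∈ τ, t ∈ l := by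
    rw [← hτ.2.2] at ht
    obtain ⟨l, hl, hxl⟩ := Finset.mem_biUnion.1 ht
    exact ⟨l, hl, List.mem_toFinset.1 hxl⟩
  have hqu : ∀ l ∈ τ, t ∈ l → l = q := by
    intro l hl htl
    by_contra hne
    exact hτ.2.1 l hl q hq hne t htl htq
  rw [key K hπ hτ hρ hST hSR hTR hp hsp hpu hq htq hqu,
    key K hτ hπ hρ hST.symm hTR hSR hq htq hqu hp hsp hpu]
  rw [Finset.sum_comm' (s' := fun l => ρ.erase l) (t' := ρ) (by
    intro x y
    simp only [Finset.mem_erase]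
    constructor
    · rintro ⟨hx, hyx, hy⟩
      exact ⟨⟨fun h => hyx h.symm, hx⟩, hy⟩
    · rintro ⟨⟨hxy, hx⟩, hy⟩
      exact ⟨hx, fun h => hxy h.symm, hy⟩)]
  refine Finset.sum_congr rfl fun m hm => Finset.sum_congr rfl fun l hl => ?_
  congr 1
  ext x
  simp only [Finset.mem_insert, Finset.mem_union, Finset.mem_erase]
  tauto
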